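/- arXiv:2211.00928 — 2 statements merged into one kernel-verified Lean document; each statement's English description precedes it below -/
import Mathlib

section
/- Let a, b : {1, …, n} → ℝ be two finite sequences that differ in exactly one coordinate i_0 (a_i = b_i for all i ≠ i_0), and suppose all entries of a and b lie in a common interval of length M, i.e., |u − v| ≤ M for any two values u, v among the entries of a and b. Let a_{(1)} ≥ ⋯ ≥ a_{(n)} and b_{(1)} ≥ ⋯ ≥ b_{(n)} denote the decreasing rearrangements of a and b. Then Σ_{j=1}^n |a_{(j)} − b_{(j)}| ≤ M. -/
open Finset

/-- The decreasing rearrangement (order statistics) of a finite real sequence,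
with a fixed tie-breaking rule: `sortDesc a j` is the `j`-th largest value of `a`,
so that `sortDesc a 0 ≥ sortDesc a 1 ≥ ⋯`. -/
noncomputable def sortDesc {n : ℕ} (a : Fin n → ℝ) : Fin n → ℝ :=
  fun j => a (Tuple.sort (fun i => -a i) j)

lemma sortDesc_antitone {n : ℕ} (a : Fin n → ℝ) : Antitone (sortDesc a) := by
  have h := Tuple.monotone_sort (fun i => -a i)
  intro i j hij
  have := h hij
  simp only [Function.comp_apply] at this
  simpa [sortDesc, neg_le_neg_iff] using this

lemma sum_sortDesc {n : ℕ} (a : Fin n → ℝ) : ∑ j, sortDesc a j = ∑ i, a i :=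
  Equiv.sum_comp (Tuple.sort (fun i => -a i)) a

lemma card_le_sortDesc {n : ℕ} (a : Fin n → ℝ) (x : ℝ) :
    Fintype.card {i // x ≤ sortDesc a i} = Fintype.card {i // x ≤ a i} :=
  Fintype.card_congr <| (Tuple.sort (fun i => -a i)).subtypeEquiv (fun i => Iff.rfl)

lemma sortDesc_mono {n : ℕ} {a b : Fin n → ℝ} (h : ∀ i, a i ≤ b i) (j : Fin n) :
    sortDesc a j ≤ sortDesc b j := by
  rw [← Tuple.lt_card_ge_iff_apply_ge_of_antitone (f := sortDesc b) (a := sortDesc a j)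
    (sortDesc_antitone b) (j := j), ← Fintype.card_subtype]
  have h1 : (j : ℕ) < Fintype.card {i // sortDesc a j ≤ sortDesc a i} := by
    rw [Fintype.card_subtype, Tuple.lt_card_ge_iff_apply_ge_of_antitone (f := sortDesc a) (a := sortDesc a j)
      (sortDesc_antitone a) (j := j)]
  calc (j : ℕ) < Fintype.card {i // sortDesc a j ≤ sortDesc a i} := h1
    _ = Fintype.card {i // sortDesc a j ≤ a i} := card_le_sortDesc a _
    _ ≤ Fintype.card {i // sortDesc a j ≤ b i} :=
        Fintype.card_subtype_mono _ _ (fun i hi => hi.trans (h i))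
    _ = Fintype.card {i // sortDesc a j ≤ sortDesc b i} := (card_le_sortDesc b _).symm

lemma l1_aux {n : ℕ} (a b : Fin n → ℝ) (i0 : Fin n)
    (hab : ∀ i, i ≠ i0 → a i = b i) (hle : a i0 ≤ b i0)
    (M : ℝ)
    (hM : ∀ u ∈ Set.range a ∪ Set.range b, ∀ v ∈ Set.range a ∪ Set.range b, |u - v| ≤ M) :
    ∑ j, |sortDesc a j - sortDesc b j| ≤ M := by
  have hpt : ∀ i, a i ≤ b i := by
    intro i
    by_cases hi : i = i0
    · subst hi; exact hle
    · exact (hab i hi).le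
  have hterm : ∀ j, |sortDesc a j - sortDesc b j| = sortDesc b j - sortDesc a j := by
    intro j
    rw [abs_sub_comm, abs_of_nonneg (sub_nonneg.mpr (sortDesc_mono hpt j))]
  calc ∑ j, |sortDesc a j - sortDesc b j| = ∑ j, (sortDesc b j - sortDesc a j) := by
        simp_rw [hterm]
    _ = ∑ i, (b i - a i) := by rw [Finset.sum_sub_distrib, sum_sortDesc, sum_sortDesc,
        Finset.sum_sub_distrib]
    _ = b i0 - a i0 := by
        rw [Finset.sum_eq_single i0]
        · intro i _ hi; rw [hab i hi]; ring
        · intro h; exact absurd (Finset.mem_univ i0) h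
    _ ≤ |b i0 - a i0| := le_abs_self _
    _ ≤ M := hM _ (Or.inr ⟨i0, rfl⟩) _ (Or.inl ⟨i0, rfl⟩)

/-- **Key combinatorial lemma.** If two sequences `a, b : Fin n → ℝ` differ in exactly one
coordinate `i₀`, and all entries of `a` and `b` lie within a common interval of length `M`
(any two values among the entries differ by at most `M` in absolute value), then the ℓ¹
distance between their decreasing rearrangements is at most `M`. -/
theorem l1_dist_sortDesc_le
    (n : ℕ) (a b : Fin n → ℝ) (i0 : Fin n)
    (hab : ∀ i, i ≠ i0 → a i = b i)
    (M : ℝ)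
    (hM : ∀ u ∈ Set.range a ∪ Set.range b, ∀ v ∈ Set.range a ∪ Set.range b, |u - v| ≤ M) :
    ∑ j, |sortDesc a j - sortDesc b j| ≤ M := by
  rcases le_total (a i0) (b i0) with h | h
  · exact l1_aux a b i0 hab h M hM
  · have := l1_aux b a i0 (fun i hi => (hab i hi).symm) h M
      (fun u hu v hv => hM u (Set.union_comm _ _ ▸ hu) v (Set.union_comm _ _ ▸ hv))
    simpa [abs_sub_comm] using this
end

section
/- Define Φ(D) = sup_{θ∈Θ} ( E_{(x,y)∼P}[ℓ(f(x;θ), y)] − L_q(θ; g(D)) ). If D and D' are two datasets of n samples differing in exactly one point (D_i = D'_i for all i ≠ i_0), then |Φ(D) − Φ(D')| ≤ (s/q)·(M/n). -/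
open MeasureTheory Finset

noncomputable section

/-- Euclidean space `ℝ^d` as functions `Fin d → ℝ`. -/
abbrev Vec (d : ℕ) : Type := Fin d → ℝ

/-- Per-sample loss `L_i(θ; D) = ℓ(f(x_i; θ), y_i)`. -/
def sampleLoss {dx dy dth n : ℕ} (ℓ : Vec dy → Vec dy → ℝ)
    (f : Vec dx → Vec dth → Vec dy) (θ : Vec dth)
    (D : Fin n → Vec dx × Vec dy) (i : Fin n) : ℝ :=
  ℓ (f (D i).1 θ) (D i).2

/-- The permutation `j ↦ (j)` arranging the per-sample losses in decreasing order
`L_{(1)}(θ;D) ≥ ⋯ ≥ L_{(n)}(θ;D)`, with a fixed tie-breaking rule. -/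
def ordIdx {dx dy dth n : ℕ} (ℓ : Vec dy → Vec dy → ℝ)
    (f : Vec dx → Vec dth → Vec dy) (θ : Vec dth)
    (D : Fin n → Vec dx × Vec dy) : Equiv.Perm (Fin n) :=
  Tuple.sort (fun i => -sampleLoss ℓ f θ D i)

/-- The ordered (top-`q`-biased) loss `L_q(θ;D) = (1/q)·Σ_j γ_j L_{(j)}(θ;D)`. -/
def orderedLoss {dx dy dth n : ℕ} (ℓ : Vec dy → Vec dy → ℝ)
    (f : Vec dx → Vec dth → Vec dy) (γ : Fin n → ℝ) (q : ℝ)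
    (θ : Vec dth) (D : Fin n → Vec dx × Vec dy) : ℝ :=
  (1 / q) * ∑ j, γ j * sampleLoss ℓ f θ D (ordIdx ℓ f θ D j)

/-- The average loss `L(θ;D) = (1/n)·Σ_i L_i(θ;D)`. -/
def avgLoss {dx dy dth n : ℕ} (ℓ : Vec dy → Vec dy → ℝ)
    (f : Vec dx → Vec dth → Vec dy) (θ : Vec dth)
    (D : Fin n → Vec dx × Vec dy) : ℝ :=
  (1 / (n : ℝ)) * ∑ i, sampleLoss ℓ f θ D i

/-- `r_i(θ;D) = Σ_j 1{i = (j)}·γ_j`: the weight of sample `i` given by its rank in the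
decreasing order of losses. -/
def rWeight {dx dy dth n : ℕ} (ℓ : Vec dy → Vec dy → ℝ)
    (f : Vec dx → Vec dth → Vec dy) (γ : Fin n → ℝ) (θ : Vec dth)
    (D : Fin n → Vec dx × Vec dy) (i : Fin n) : ℝ :=
  ∑ j, if i = ordIdx ℓ f θ D j then γ j else 0

/-- Corrupted dataset `g(D) = ((g_i^x(x_i), g_i^y(y_i)))_{i=1}^n`. -/
def corrupt {dx dy n : ℕ} (gx : Fin n → Vec dx → Vec dx) (gy : Fin n → Vec dy → Vec dy)
    (D : Fin n → Vec dx × Vec dy) : Fin n → Vec dx × Vec dy :=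
  fun i => (gx i (D i).1, gy i (D i).2)

/-- Expected loss `E_{(x,y)∼P}[ℓ(f(x;θ), y)]`. -/
def expLoss {dx dy dth : ℕ} (ℓ : Vec dy → Vec dy → ℝ)
    (f : Vec dx → Vec dth → Vec dy) (P : Measure (Vec dx × Vec dy)) (θ : Vec dth) : ℝ :=
  ∫ z, ℓ (f z.1 θ) z.2 ∂P

/-- Empirical Rademacher complexity
`R̂_n(Θ; D) = E_ξ[sup_{θ∈Θ} (1/n)·Σ_i ξ_i ℓ(f(x_i;θ), y_i)]`, where the expectation is over
i.i.d. uniform signs `ξ_i ∈ {−1, 1}` (written as an average over all `2^n` sign vectors). -/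
def empRad {dx dy dth n : ℕ} (ℓ : Vec dy → Vec dy → ℝ)
    (f : Vec dx → Vec dth → Vec dy) (Θ : Set (Vec dth))
    (D : Fin n → Vec dx × Vec dy) : ℝ :=
  ((2 : ℝ) ^ n)⁻¹ * ∑ ε : Fin n → Bool,
    ⨆ θ : Θ, (1 / (n : ℝ)) * ∑ i, (if ε i then (1 : ℝ) else -1) * ℓ (f (D i).1 θ) (D i).2

/-- The i.i.d. product measure `P^n` on datasets of `n` samples. -/
def iidMeasure {dx dy : ℕ} (P : Measure (Vec dx × Vec dy)) (n : ℕ) :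
    Measure (Fin n → Vec dx × Vec dy) :=
  Measure.pi fun _ : Fin n => P

/-- The top-`q`-biased factor `Q_{n,q}(Θ, g)`. -/
def Qfactor {dx dy dth : ℕ} {n : ℕ} (ℓ : Vec dy → Vec dy → ℝ)
    (f : Vec dx → Vec dth → Vec dy) (γ : Fin n → ℝ) (q : ℝ)
    (gx : Fin n → Vec dx → Vec dx) (gy : Fin n → Vec dy → Vec dy)
    (Θ : Set (Vec dth)) (P : Measure (Vec dx × Vec dy)) : ℝ :=
  ∫ D, ⨅ θ : Θ, (1 / (n : ℝ)) * ∑ i,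
      ((rWeight ℓ f γ θ (corrupt gx gy D) i * n / q) *
          ℓ (f (gx i (D i).1) θ) (gy i (D i).2)
        - ℓ (f (D i).1 θ) (D i).2) ∂(iidMeasure P n)

/-- `Φ(D) = sup_{θ∈Θ} ( E_{(x,y)∼P}[ℓ(f(x;θ),y)] − L_q(θ; g(D)) )`. -/
def Phi {dx dy dth n : ℕ} (ℓ : Vec dy → Vec dy → ℝ)
    (f : Vec dx → Vec dth → Vec dy) (γ : Fin n → ℝ) (q : ℝ)
    (gx : Fin n → Vec dx → Vec dx) (gy : Fin n → Vec dy → Vec dy)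
    (Θ : Set (Vec dth)) (P : Measure (Vec dx × Vec dy))
    (D : Fin n → Vec dx × Vec dy) : ℝ :=
  ⨆ θ : Θ, (expLoss ℓ f P θ - orderedLoss ℓ f γ q θ (corrupt gx gy D))

/-- The decreasing sort is monotone in the vector (pointwise order). -/
lemma sortedDesc_mono {n : ℕ} (v w : Fin n → ℝ) (hvw : ∀ i, v i ≤ w i) (j : Fin n) :
    v (Tuple.sort (fun i => -v i) j) ≤ w (Tuple.sort (fun i => -w i) j) := by
  set σ := Tuple.sort (fun i => -v i) with hσdef
  set τ := Tuple.sort (fun i => -w i) with hτdef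
  have hσ : Antitone fun k => v (σ k) := by
    intro a b hab
    have := Tuple.monotone_sort (fun i => -v i) hab
    simpa [hσdef] using this
  have hτ : Antitone fun k => w (τ k) := by
    intro a b hab
    have := Tuple.monotone_sort (fun i => -w i) hab
    simpa [hτdef] using this
  by_contra hcon
  push_neg at hcon
  have hsub : (Finset.Iic j).image σ ⊆ (Finset.Iio j).image τ := by
    intro i hi
    simp only [Finset.mem_image] at hi ⊢
    obtain ⟨k, hk, rfl⟩ := hi
    refine ⟨τ.symm (σ k), ?_, by simp⟩
    simp only [Finset.mem_Iio]
    by_contra hle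
    push_neg at hle
    have h1 : w (τ (τ.symm (σ k))) ≤ w (τ j) := hτ hle
    rw [Equiv.apply_symm_apply] at h1
    have h2 : v (σ j) ≤ v (σ k) := hσ (Finset.mem_Iic.mp hk)
    have h3 := hvw (σ k)
    linarith
  have hc1 : ((Finset.Iic j).image σ).card = (j : ℕ) + 1 := by
    rw [Finset.card_image_of_injective _ σ.injective, Fin.card_Iic]
  have hc2 : ((Finset.Iio j).image τ).card ≤ (j : ℕ) := by
    rw [Finset.card_image_of_injective _ τ.injective, Fin.card_Iio]
  have := Finset.card_le_card hsub
  omega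

/-- One-sided key estimate: if `L ≤ L'` off nothing (they agree off `i0` and
`L i0 ≤ L' i0`), the weighted sorted sums differ by between `0` and `(s/n)·M`. -/
lemma key_one {n : ℕ} (s M : ℝ) (hs : 0 ≤ s) (γ : Fin n → ℝ)
    (hγ : ∀ j, 0 ≤ γ j ∧ γ j ≤ s / n)
    (L L' : Fin n → ℝ) (i0 : Fin n) (h : ∀ i, i ≠ i0 → L i = L' i)
    (hc : L i0 ≤ L' i0) (hMc : L' i0 - L i0 ≤ M) :
    0 ≤ (∑ j, γ j * L' (Tuple.sort (fun i => -L' i) j))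
        - ∑ j, γ j * L (Tuple.sort (fun i => -L i) j) ∧
    (∑ j, γ j * L' (Tuple.sort (fun i => -L' i) j))
        - ∑ j, γ j * L (Tuple.sort (fun i => -L i) j) ≤ s / n * M := by
  set σ := Tuple.sort (fun i => -L i)
  set τ := Tuple.sort (fun i => -L' i)
  have hle : ∀ i, L i ≤ L' i := by
    intro i
    by_cases hi : i = i0
    · subst hi; exact hc
    · rw [h i hi]
  have hΔ : ∀ j, L (σ j) ≤ L' (τ j) := fun j => sortedDesc_mono L L' hle j
  have hsum : (∑ j, L' (τ j)) - ∑ j, L (σ j) = L' i0 - L i0 := by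
    rw [Equiv.sum_comp τ L', Equiv.sum_comp σ L, ← Finset.sum_sub_distrib]
    rw [Finset.sum_eq_single i0]
    · intro b _ hb; rw [h b hb]; ring
    · intro hb; exact absurd (Finset.mem_univ i0) hb
  have hsn : 0 ≤ s / n := by positivity
  constructor
  · rw [← Finset.sum_sub_distrib]
    apply Finset.sum_nonneg
    intro j _
    have := hΔ j
    have := (hγ j).1
    nlinarith
  · rw [← Finset.sum_sub_distrib]
    have hstep : ∀ j ∈ Finset.univ, γ j * L' (τ j) - γ j * L (σ j)
        ≤ s / n * (L' (τ j) - L (σ j)) := by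
      intro j _
      have h1 := hΔ j
      have h2 := (hγ j).2
      have h3 := (hγ j).1
      nlinarith
    calc (∑ j, (γ j * L' (τ j) - γ j * L (σ j)))
        ≤ ∑ j, s / n * (L' (τ j) - L (σ j)) := Finset.sum_le_sum hstep
      _ = s / n * ((∑ j, L' (τ j)) - ∑ j, L (σ j)) := by
          simp only [mul_sub, Finset.sum_sub_distrib, Finset.mul_sum]
      _ = s / n * (L' i0 - L i0) := by rw [hsum]
      _ ≤ s / n * M := by apply mul_le_mul_of_nonneg_left hMc hsn

/-- Key estimate: weighted sorted sums of two vectors differing in one coordinate. -/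
lemma key_abs {n : ℕ} (s M : ℝ) (hs : 0 ≤ s) (γ : Fin n → ℝ)
    (hγ : ∀ j, 0 ≤ γ j ∧ γ j ≤ s / n)
    (L L' : Fin n → ℝ) (i0 : Fin n) (h : ∀ i, i ≠ i0 → L i = L' i)
    (hMc : |L i0 - L' i0| ≤ M) :
    |(∑ j, γ j * L' (Tuple.sort (fun i => -L' i) j))
        - ∑ j, γ j * L (Tuple.sort (fun i => -L i) j)| ≤ s / n * M := by
  have hM0 : 0 ≤ M := le_trans (abs_nonneg _) hMc
  have hsn : 0 ≤ s / n * M := by positivity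
  rcases le_total (L i0) (L' i0) with hc | hc
  · obtain ⟨h1, h2⟩ := key_one s M hs γ hγ L L' i0 h hc (by
      rw [abs_sub_comm] at hMc; exact le_trans (le_abs_self _) hMc)
    rw [abs_le]; constructor <;> linarith
  · obtain ⟨h1, h2⟩ := key_one s M hs γ hγ L' L i0 (fun i hi => (h i hi).symm) hc
      (le_trans (le_abs_self _) hMc)
    rw [abs_le]; constructor <;> linarith

/-- One-sided bound for `Φ`. -/
lemma Phi_sub_Phi_le
    {dx dy dth n : ℕ} (hn : 0 < n)
    (Xs : Set (Vec dx)) (Ys : Set (Vec dy))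
    (P : Measure (Vec dx × Vec dy))
    (f : Vec dx → Vec dth → Vec dy)
    (ℓ : Vec dy → Vec dy → ℝ)
    (Θ : Set (Vec dth)) (hΘ : Θ.Nonempty)
    (q s : ℝ) (hq : 0 < q) (hs : 0 < s)
    (γ : Fin n → ℝ) (hγ : ∀ j, 0 ≤ γ j ∧ γ j ≤ s / n)
    (gx : Fin n → Vec dx → Vec dx) (gy : Fin n → Vec dy → Vec dy)
    (hg : ∀ (i : Fin n), ∀ z ∈ Xs ×ˢ Ys, (gx i z.1, gy i z.2) ∈ Xs ×ˢ Ys)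
    (M : ℝ)
    (hM : ∀ θ ∈ Θ, ∀ z ∈ Xs ×ˢ Ys, ∀ z' ∈ Xs ×ˢ Ys,
      |ℓ (f z.1 θ) z.2 - ℓ (f z'.1 θ) z'.2| ≤ M)
    (hbdd : ∀ E : Fin n → Vec dx × Vec dy, (∀ i, E i ∈ Xs ×ˢ Ys) →
      BddAbove (Set.range fun θ : Θ =>
        expLoss ℓ f P θ - orderedLoss ℓ f γ q θ (corrupt gx gy E)))
    (D D' : Fin n → Vec dx × Vec dy)
    (hD : ∀ i, D i ∈ Xs ×ˢ Ys) (hD' : ∀ i, D' i ∈ Xs ×ˢ Ys)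
    (i0 : Fin n) (hDD' : ∀ i, i ≠ i0 → D i = D' i) :
    Phi ℓ f γ q gx gy Θ P D - Phi ℓ f γ q gx gy Θ P D' ≤ (s / q) * (M / n) := by
  have hnR : (0 : ℝ) < n := by exact_mod_cast hn
  have hne : Nonempty Θ := hΘ.to_subtype
  rw [sub_le_iff_le_add, Phi]
  apply ciSup_le
  intro θ
  have hθ : (θ : Vec dth) ∈ Θ := θ.2
  set E := corrupt gx gy D with hE
  set E' := corrupt gx gy D' with hE'
  have hEmem : ∀ i, E i ∈ Xs ×ˢ Ys := fun i => hg i (D i) (hD i)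
  have hE'mem : ∀ i, E' i ∈ Xs ×ˢ Ys := fun i => hg i (D' i) (hD' i)
  have hEE' : ∀ i, i ≠ i0 → E i = E' i := by
    intro i hi; simp only [hE, hE', corrupt, hDD' i hi]
  set L : Fin n → ℝ := fun i => sampleLoss ℓ f θ E i with hL
  set L' : Fin n → ℝ := fun i => sampleLoss ℓ f θ E' i with hL'
  have hLeq : ∀ i, i ≠ i0 → L i = L' i := by
    intro i hi; simp only [hL, hL', sampleLoss, hEE' i hi]
  have hMc : |L i0 - L' i0| ≤ M :=
    hM θ hθ (E i0) (hEmem i0) (E' i0) (hE'mem i0)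
  have hkey := key_abs s M hs.le γ hγ L L' i0 hLeq hMc
  have hord : |orderedLoss ℓ f γ q θ E' - orderedLoss ℓ f γ q θ E| ≤ (s / q) * (M / n) := by
    have : orderedLoss ℓ f γ q θ E' - orderedLoss ℓ f γ q θ E
        = (1 / q) * ((∑ j, γ j * L' (Tuple.sort (fun i => -L' i) j))
            - ∑ j, γ j * L (Tuple.sort (fun i => -L i) j)) := by
      simp only [orderedLoss, ordIdx, hL, hL']
      ring
    rw [this, abs_mul, abs_of_pos (by positivity : (0:ℝ) < 1 / q)]
    calc 1 / q * |(∑ j, γ j * L' (Tuple.sort (fun i => -L' i) j))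
            - ∑ j, γ j * L (Tuple.sort (fun i => -L i) j)|
        ≤ 1 / q * (s / n * M) := by
          apply mul_le_mul_of_nonneg_left hkey (by positivity)
      _ = (s / q) * (M / n) := by field_simp
  have hstep : expLoss ℓ f P θ - orderedLoss ℓ f γ q θ E
      ≤ (s / q) * (M / n) + (expLoss ℓ f P θ - orderedLoss ℓ f γ q θ E') := by
    have := abs_le.mp hord
    linarith [this.1, this.2]
  refine hstep.trans (add_le_add_right ?_ _)
  exact le_ciSup (hbdd D' hD') θ


/-- **Bounded differences of `Φ`.** If the datasets `D` and `D'` (with samples in `X × Y`)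
differ in exactly one point, then `|Φ(D) − Φ(D')| ≤ (s/q)·(M/n)`. -/
theorem abs_Phi_sub_Phi_le
    (dx dy dth n : ℕ) (hn : 0 < n)
    (Xs : Set (Vec dx)) (Ys : Set (Vec dy))
    (P : Measure (Vec dx × Vec dy)) [IsProbabilityMeasure P]
    (hP : ∀ᵐ z ∂P, z ∈ Xs ×ˢ Ys)
    (f : Vec dx → Vec dth → Vec dy)
    (ℓ : Vec dy → Vec dy → ℝ) (hℓ : ∀ a b, 0 ≤ ℓ a b)
    (Θ : Set (Vec dth)) (hΘ : Θ.Nonempty)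
    (q s : ℝ) (hq : 0 < q) (hs : 0 < s)
    (γ : Fin n → ℝ) (hγ : ∀ j, 0 ≤ γ j ∧ γ j ≤ s / n)
    (gx : Fin n → Vec dx → Vec dx) (gy : Fin n → Vec dy → Vec dy)
    (hg : ∀ (i : Fin n), ∀ z ∈ Xs ×ˢ Ys, (gx i z.1, gy i z.2) ∈ Xs ×ˢ Ys)
    (M : ℝ)
    (hM : ∀ θ ∈ Θ, ∀ z ∈ Xs ×ˢ Ys, ∀ z' ∈ Xs ×ˢ Ys,
      |ℓ (f z.1 θ) z.2 - ℓ (f z'.1 θ) z'.2| ≤ M)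
    -- the supremum defining `Φ` is assumed finite on datasets supported in `X × Y`
    (hbdd : ∀ E : Fin n → Vec dx × Vec dy, (∀ i, E i ∈ Xs ×ˢ Ys) →
      BddAbove (Set.range fun θ : Θ =>
        expLoss ℓ f P θ - orderedLoss ℓ f γ q θ (corrupt gx gy E)))
    (D D' : Fin n → Vec dx × Vec dy)
    (hD : ∀ i, D i ∈ Xs ×ˢ Ys) (hD' : ∀ i, D' i ∈ Xs ×ˢ Ys)
    (i0 : Fin n) (hDD' : ∀ i, i ≠ i0 → D i = D' i) :
    |Phi ℓ f γ q gx gy Θ P D - Phi ℓ f γ q gx gy Θ P D'| ≤ (s / q) * (M / n) := by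
  have h1 := Phi_sub_Phi_le hn Xs Ys P f ℓ Θ hΘ q s hq hs γ hγ gx gy hg M hM hbdd D D' hD hD' i0 hDD'
  have h2 := Phi_sub_Phi_le hn Xs Ys P f ℓ Θ hΘ q s hq hs γ hγ gx gy hg M hM hbdd D' D hD' hD i0 (fun i hi => (hDD' i hi).symm)
  rw [abs_le]
  constructor <;> linarith
end
end
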